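/- Strict concavity of the q-Lagrangian: let q be a nonzero real number with q < 1. The function L_q(v) := η(v,v)^{q/2} / q is strictly concave on the open future timelike cone C⁺ = {v ∈ ℝ^{n+1} : v 0 > 0 and η(v,v) > 0}; that is, for all distinct v, w ∈ C⁺ and all λ ∈ (0,1), L_q((1−λ)v + λw) > (1−λ)L_q(v) + λL_q(w). -/

import Mathlib

/-- The Minkowski bilinear form on `ℝ^{n+1}`. -/
def minkEta (n : ℕ) (v w : Fin (n + 1) → ℝ) : ℝ :=
  v 0 * w 0 - ∑ i : Fin n, v i.succ * w i.succ

/-- The open future timelike cone in Minkowski space. -/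
def futureTimeCone (n : ℕ) : Set (Fin (n + 1) → ℝ) :=
  {v | 0 < v 0 ∧ 0 < minkEta n v v}

open Real Set

noncomputable section MinkAux

variable {n : ℕ}

lemma comb_pos {s t x y : ℝ} (hs : 0 ≤ s) (ht : 0 ≤ t) (hst : s + t = 1)
    (hx : 0 < x) (hy : 0 < y) : 0 < s * x + t * y := by
  rcases hs.lt_or_eq with h | h
  · nlinarith [mul_pos h hx, mul_nonneg ht hy.le]
  · have ht1 : t = 1 := by linarith
    rw [← h, ht1]; simpa using hy

/-- Spatial part of a Minkowski vector, as a Euclidean vector. -/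
def spPart (n : ℕ) (v : Fin (n + 1) → ℝ) : EuclideanSpace ℝ (Fin n) := WithLp.toLp 2 (fun i : Fin n => v i.succ)

lemma minkEta_eq_inner (v w : Fin (n + 1) → ℝ) :
    minkEta n v w = v 0 * w 0 - inner ℝ (spPart n v) (spPart n w) := by
  simp [minkEta, spPart, PiLp.inner_apply, RCLike.inner_apply, mul_comm]

lemma minkEta_self (v : Fin (n + 1) → ℝ) :
    minkEta n v v = v 0 ^ 2 - ‖spPart n v‖ ^ 2 := by
  rw [minkEta_eq_inner, real_inner_self_eq_norm_sq]; ring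

lemma spPart_lt (v : Fin (n + 1) → ℝ) (hv : v ∈ futureTimeCone n) : ‖spPart n v‖ < v 0 := by
  have h1 := hv.1
  have h2 := hv.2
  rw [minkEta_self] at h2
  nlinarith [norm_nonneg (spPart n v)]

/-- Reverse Cauchy–Schwarz on the future cone. -/
lemma mink_revCS {v w : Fin (n + 1) → ℝ} (hv : v ∈ futureTimeCone n)
    (hw : w ∈ futureTimeCone n) :
    Real.sqrt (minkEta n v v) * Real.sqrt (minkEta n w w) ≤ minkEta n v w := by
  set a := ‖spPart n v‖ with ha
  set b := ‖spPart n w‖ with hb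
  have hav : a < v 0 := spPart_lt v hv
  have hbw : b < w 0 := spPart_lt w hw
  have ha0 : 0 ≤ a := norm_nonneg _
  have hb0 : 0 ≤ b := norm_nonneg _
  have hp : inner ℝ (spPart n v) (spPart n w) ≤ a * b := real_inner_le_norm _ _
  have hvw' : minkEta n v w = v 0 * w 0 - inner ℝ (spPart n v) (spPart n w) :=
    minkEta_eq_inner _ _
  have key : Real.sqrt (minkEta n v v) * Real.sqrt (minkEta n w w) ≤ v 0 * w 0 - a * b := by
    rw [minkEta_self, minkEta_self, ← Real.sqrt_mul (by nlinarith)]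
    calc Real.sqrt ((v 0 ^ 2 - a ^ 2) * (w 0 ^ 2 - b ^ 2))
        ≤ Real.sqrt ((v 0 * w 0 - a * b) ^ 2) :=
          Real.sqrt_le_sqrt (by nlinarith [sq_nonneg (v 0 * b - w 0 * a)])
      _ = v 0 * w 0 - a * b := Real.sqrt_sq (by nlinarith)
  rw [hvw']
  linarith

/-- Strict reverse Cauchy–Schwarz for non-proportional vectors. -/
lemma mink_revCS_strict {v w : Fin (n + 1) → ℝ} (hv : v ∈ futureTimeCone n)
    (hw : w ∈ futureTimeCone n) (hne : ∀ c : ℝ, w ≠ c • v) :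
    Real.sqrt (minkEta n v v) * Real.sqrt (minkEta n w w) < minkEta n v w := by
  set a := ‖spPart n v‖ with ha
  set b := ‖spPart n w‖ with hb
  have hav : a < v 0 := spPart_lt v hv
  have hbw : b < w 0 := spPart_lt w hw
  have ha0 : 0 ≤ a := norm_nonneg _
  have hb0 : 0 ≤ b := norm_nonneg _
  have hvne : v 0 ≠ 0 := ne_of_gt hv.1
  have hvw' : minkEta n v w = v 0 * w 0 - inner ℝ (spPart n v) (spPart n w) :=
    minkEta_eq_inner _ _
  by_cases hpar : b • spPart n v = a • spPart n w ∧ v 0 * b = w 0 * a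
  · -- proportional: contradiction
    exfalso
    apply hne (w 0 / v 0)
    funext i
    refine Fin.cases ?_ (fun j => ?_) i
    · simp only [Pi.smul_apply, smul_eq_mul]
      field_simp
    · simp only [Pi.smul_apply, smul_eq_mul]
      rcases eq_or_ne a 0 with haz | haz
      · have hv0 : spPart n v = 0 := by rwa [ha, norm_eq_zero] at haz
        have hbz : b = 0 := by
          have := hpar.2
          rw [haz, mul_zero] at this
          nlinarith [hv.1, hw.1]
        have hw0 : spPart n w = 0 := by rwa [hb, norm_eq_zero] at hbz
        have h1 : v j.succ = 0 := congrArg (fun x : EuclideanSpace ℝ (Fin n) => x j) hv0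
        have h2 : w j.succ = 0 := congrArg (fun x : EuclideanSpace ℝ (Fin n) => x j) hw0
        simp [h1, h2]
      · have h1 : b * v j.succ = a * w j.succ := congrArg (fun x : EuclideanSpace ℝ (Fin n) => x j) hpar.1
        have h2 := hpar.2
        rw [div_mul_eq_mul_div, eq_div_iff hvne]
        have h3 : a * (w j.succ * v 0) = a * (w 0 * v j.succ) := by
          linear_combination (-(v 0)) * h1 + v j.succ * h2
        exact mul_left_cancel₀ haz h3
  · -- strict inequality
    have hp : inner ℝ (spPart n v) (spPart n w) ≤ a * b := real_inner_le_norm _ _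
    rw [hvw']
    by_cases hin : b • spPart n v = a • spPart n w
    · have hba : v 0 * b ≠ w 0 * a := fun h => hpar ⟨hin, h⟩
      have key : Real.sqrt (minkEta n v v) * Real.sqrt (minkEta n w w) < v 0 * w 0 - a * b := by
        rw [minkEta_self, minkEta_self, ← Real.sqrt_mul (by nlinarith)]
        have hd : 0 < (v 0 * b - w 0 * a) ^ 2 :=
          sq_pos_of_ne_zero (sub_ne_zero.2 hba)
        have hsq : (v 0 ^ 2 - a ^ 2) * (w 0 ^ 2 - b ^ 2) < (v 0 * w 0 - a * b) ^ 2 := by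
          nlinarith
        have e1 : (0:ℝ) < v 0 ^ 2 - a ^ 2 := by nlinarith
        have e2 : (0:ℝ) < w 0 ^ 2 - b ^ 2 := by nlinarith
        calc Real.sqrt ((v 0 ^ 2 - a ^ 2) * (w 0 ^ 2 - b ^ 2))
            < Real.sqrt ((v 0 * w 0 - a * b) ^ 2) :=
              Real.sqrt_lt_sqrt (mul_pos e1 e2).le hsq
          _ = v 0 * w 0 - a * b := Real.sqrt_sq (by nlinarith)
      linarith
    · have hps : inner ℝ (spPart n v) (spPart n w) < a * b := by
        rw [ha, hb]
        exact inner_lt_norm_mul_iff_real.2 fun h => hin (by rw [ha, hb]; exact h)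
      have key : Real.sqrt (minkEta n v v) * Real.sqrt (minkEta n w w) ≤ v 0 * w 0 - a * b := by
        rw [minkEta_self, minkEta_self, ← Real.sqrt_mul (by nlinarith)]
        calc Real.sqrt ((v 0 ^ 2 - a ^ 2) * (w 0 ^ 2 - b ^ 2))
            ≤ Real.sqrt ((v 0 * w 0 - a * b) ^ 2) :=
              Real.sqrt_le_sqrt (by nlinarith [sq_nonneg (v 0 * b - w 0 * a)])
          _ = v 0 * w 0 - a * b := Real.sqrt_sq (by nlinarith)
      linarith

lemma mink_expand (v w : Fin (n + 1) → ℝ) (s t : ℝ) :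
    minkEta n (s • v + t • w) (s • v + t • w) =
      s ^ 2 * minkEta n v v + 2 * s * t * minkEta n v w + t ^ 2 * minkEta n w w := by
  have hsp : spPart n (s • v + t • w) = s • spPart n v + t • spPart n w := by
    ext j; simp [spPart]
  simp only [minkEta_eq_inner, hsp, Pi.add_apply, Pi.smul_apply, smul_eq_mul,
    inner_add_add_self, real_inner_smul_left, real_inner_smul_right, real_inner_comm]
  ring

lemma mink_comb_pos {v w : Fin (n + 1) → ℝ} (hv : v ∈ futureTimeCone n)
    (hw : w ∈ futureTimeCone n) {s t : ℝ} (hs : 0 ≤ s) (ht : 0 ≤ t) (hst : s + t = 1) :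
    s * Real.sqrt (minkEta n v v) + t * Real.sqrt (minkEta n w w) ≤
      Real.sqrt (minkEta n (s • v + t • w) (s • v + t • w)) ∧
    0 < s * Real.sqrt (minkEta n v v) + t * Real.sqrt (minkEta n w w) := by
  set A := Real.sqrt (minkEta n v v) with hA
  set B := Real.sqrt (minkEta n w w) with hB
  have hApos : 0 < A := Real.sqrt_pos.2 hv.2
  have hBpos : 0 < B := Real.sqrt_pos.2 hw.2
  have hA2 : A ^ 2 = minkEta n v v := Real.sq_sqrt hv.2.le
  have hB2 : B ^ 2 = minkEta n w w := Real.sq_sqrt hw.2.le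
  have hcs : A * B ≤ minkEta n v w := mink_revCS hv hw
  have hpos : 0 < s * A + t * B := comb_pos hs ht hst hApos hBpos
  refine ⟨?_, hpos⟩
  have hexp := mink_expand (n := n) v w s t
  have hge : (s * A + t * B) ^ 2 ≤ minkEta n (s • v + t • w) (s • v + t • w) := by
    rw [hexp]
    nlinarith [mul_nonneg (mul_nonneg hs ht) (sub_nonneg.2 hcs)]
  calc s * A + t * B = Real.sqrt ((s * A + t * B) ^ 2) := (Real.sqrt_sq hpos.le).symm
    _ ≤ _ := Real.sqrt_le_sqrt hge

lemma futureTimeCone_convex : Convex ℝ (futureTimeCone n) := by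
  intro v hv w hw s t hs ht hst
  constructor
  · have h0 : (s • v + t • w) 0 = s * v 0 + t * w 0 := by simp
    rw [h0]
    exact comb_pos hs ht hst hv.1 hw.1
  · have h := mink_comb_pos hv hw hs ht hst
    exact Real.sqrt_pos.1 (lt_of_lt_of_le h.2 h.1)

/-- Strict convexity of `x ^ q` on `(0, ∞)` for negative `q`. -/
lemma strictConvexOn_rpow_neg {q : ℝ} (hq : q < 0) :
    StrictConvexOn ℝ (Set.Ioi 0) fun x : ℝ => x ^ q := by
  apply strictConvexOn_of_deriv2_pos (convex_Ioi 0)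
  · exact fun x hx => (Real.continuousAt_rpow_const x q
      (Or.inl (ne_of_gt hx))).continuousWithinAt
  · intro x hx
    rw [interior_Ioi] at hx
    have hx0 : (0 : ℝ) < x := hx
    have h1 : deriv (fun y : ℝ => y ^ q) =ᶠ[nhds x] fun y => q * y ^ (q - 1) := by
      filter_upwards [eventually_ne_nhds hx0.ne'] with y hy
      exact Real.deriv_rpow_const y q
    have h2 : deriv (deriv fun y : ℝ => y ^ q) x = q * ((q - 1) * x ^ (q - 1 - 1)) := by
      rw [h1.deriv_eq]
      exact ((Real.hasDerivAt_rpow_const (p := q - 1) (Or.inl hx0.ne')).const_mul q).deriv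
    have h3 : (0 : ℝ) < q * ((q - 1) * x ^ (q - 1 - 1)) := by
      have hpow := Real.rpow_pos_of_pos hx0 (q - 1 - 1)
      nlinarith [mul_pos (mul_pos_of_neg_of_neg hq (show q - 1 < 0 by linarith)) hpow]
    simpa [Function.iterate_succ, h2] using h3

/-- Pointwise strict concavity inequality for `x ↦ x^q / q`. -/
lemma g_strict {q : ℝ} (hq0 : q ≠ 0) (hq1 : q < 1) {A B s t : ℝ} (hA : 0 < A) (hB : 0 < B)
    (hAB : A ≠ B) (hs : 0 < s) (ht : 0 < t) (hst : s + t = 1) :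
    s * (A ^ q / q) + t * (B ^ q / q) < (s * A + t * B) ^ q / q := by
  rcases lt_or_gt_of_ne hq0 with hq | hq
  · -- q < 0 : x^q strictly convex
    have h := (strictConvexOn_rpow_neg hq).2 (mem_Ioi.2 hA) (mem_Ioi.2 hB) hAB hs ht hst
    simp only [smul_eq_mul] at h
    rw [← mul_div_assoc, ← mul_div_assoc, ← add_div, div_lt_div_right_of_neg hq]
    exact h
  · -- 0 < q < 1 : x^q strictly concave
    have h := (Real.strictConcaveOn_rpow hq hq1).2 (mem_Ici.2 hA.le) (mem_Ici.2 hB.le)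
      hAB hs ht hst
    simp only [smul_eq_mul] at h
    rw [← mul_div_assoc, ← mul_div_assoc, ← add_div, div_lt_div_iff_of_pos_right hq]
    exact h

lemma g_le {q : ℝ} (hq0 : q ≠ 0) (hq1 : q < 1) {A B s t : ℝ} (hA : 0 < A) (hB : 0 < B)
    (hs : 0 < s) (ht : 0 < t) (hst : s + t = 1) :
    s * (A ^ q / q) + t * (B ^ q / q) ≤ (s * A + t * B) ^ q / q := by
  rcases eq_or_ne A B with rfl | hAB
  · have h1 : s * A + t * A = A := by nlinarith
    have h2 : s * (A ^ q / q) + t * (A ^ q / q) = A ^ q / q := by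
      rw [← add_mul, hst, one_mul]
    rw [h1, h2]
  · exact (g_strict hq0 hq1 hA hB hAB hs ht hst).le

lemma g_mono {q : ℝ} (hq0 : q ≠ 0) (hq1 : q < 1) {x y : ℝ} (hx : 0 < x) (hxy : x < y) :
    x ^ q / q < y ^ q / q := by
  rcases lt_or_gt_of_ne hq0 with hq | hq
  · rw [div_lt_div_right_of_neg hq]
    exact Real.rpow_lt_rpow_of_neg hx hxy hq
  · rw [div_lt_div_iff_of_pos_right hq]
    exact Real.rpow_lt_rpow hx.le hxy hq

lemma rpow_half_eq (x : ℝ) (hx : 0 < x) (q : ℝ) : x ^ (q / 2) = Real.sqrt x ^ q := by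
  rw [Real.sqrt_eq_rpow, ← Real.rpow_mul hx.le]
  congr 1
  ring

end MinkAux

/-- Strict concavity of the `q`-Lagrangian `L_q(v) = η(v,v)^{q/2}/q` on the open future
timelike cone, for nonzero `q < 1`. -/
theorem lagrangian_strict_concave (n : ℕ) (hn : 1 ≤ n) (q : ℝ) (hq0 : q ≠ 0) (hq1 : q < 1) :
    StrictConcaveOn ℝ (futureTimeCone n) (fun v => minkEta n v v ^ (q / 2) / q) := by
  refine ⟨futureTimeCone_convex, ?_⟩
  intro v hv w hw hvw s t hs ht hst
  set A := Real.sqrt (minkEta n v v) with hA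
  set B := Real.sqrt (minkEta n w w) with hB
  have hApos : 0 < A := Real.sqrt_pos.2 hv.2
  have hBpos : 0 < B := Real.sqrt_pos.2 hw.2
  have hcomb := mink_comb_pos hv hw hs.le ht.le hst
  set u := s • v + t • w with hu
  have huc : u ∈ futureTimeCone n := futureTimeCone_convex hv hw hs.le ht.le hst
  have hurw : minkEta n u u ^ (q / 2) / q = Real.sqrt (minkEta n u u) ^ q / q := by
    rw [rpow_half_eq _ huc.2]
  have hvrw : minkEta n v v ^ (q / 2) / q = A ^ q / q := by rw [rpow_half_eq _ hv.2]
  have hwrw : minkEta n w w ^ (q / 2) / q = B ^ q / q := by rw [rpow_half_eq _ hw.2]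
  simp only [smul_eq_mul]
  rw [hurw, hvrw, hwrw]
  by_cases hprop : ∃ c : ℝ, w = c • v
  · -- proportional case: use strict concavity of g
    obtain ⟨c, rfl⟩ := hprop
    have hc0 : 0 < c := by
      have h1 : (c • v) 0 = c * v 0 := rfl
      have h2 := hw.1
      rw [h1] at h2
      nlinarith [hv.1]
    have hc1 : c ≠ 1 := fun h => hvw (by rw [h, one_smul])
    have hBA : B = c * A := by
      rw [hB, hA]
      have hce : minkEta n (c • v) (c • v) = c ^ 2 * minkEta n v v := by
        have := mink_expand (n := n) v v c 0
        simpa using this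
      rw [hce, Real.sqrt_mul (by positivity), Real.sqrt_sq hc0.le]
    have hABne : A ≠ B := by
      rw [hBA]
      intro h
      apply hc1
      have h' : A * 1 = A * c := by rw [mul_one]; linarith [h]
      exact ((mul_left_cancel₀ hApos.ne' h')).symm
    have hg := g_strict hq0 hq1 hApos hBpos hABne hs ht hst
    have hle : s * A + t * B ≤ Real.sqrt (minkEta n u u) := hcomb.1
    rcases eq_or_lt_of_le hle with heq | hlt
    · rw [← heq]; exact hg
    · calc s * (A ^ q / q) + t * (B ^ q / q) < (s * A + t * B) ^ q / q := hg
        _ < Real.sqrt (minkEta n u u) ^ q / q := g_mono hq0 hq1 hcomb.2 hlt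
  · -- non-proportional: strict reverse Cauchy–Schwarz
    push_neg at hprop
    have hcs : A * B < minkEta n v w := mink_revCS_strict hv hw hprop
    have hA2 : A ^ 2 = minkEta n v v := Real.sq_sqrt hv.2.le
    have hB2 : B ^ 2 = minkEta n w w := Real.sq_sqrt hw.2.le
    have hlt : s * A + t * B < Real.sqrt (minkEta n u u) := by
      have hexp := mink_expand (n := n) v w s t
      have hgt : (s * A + t * B) ^ 2 < minkEta n u u := by
        rw [hu, hexp]
        nlinarith [mul_pos (mul_pos hs ht) (sub_pos.2 hcs)]
      calc s * A + t * B = Real.sqrt ((s * A + t * B) ^ 2) :=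
            (Real.sqrt_sq hcomb.2.le).symm
        _ < Real.sqrt (minkEta n u u) := Real.sqrt_lt_sqrt (by positivity) hgt
    calc s * (A ^ q / q) + t * (B ^ q / q) ≤ (s * A + t * B) ^ q / q :=
          g_le hq0 hq1 hApos hBpos hs ht hst
      _ < Real.sqrt (minkEta n u u) ^ q / q := g_mono hq0 hq1 hcomb.2 hlt
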